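/- The quotient of the space of ordered triples of distinct points of S² by the diagonal action of SO(3), with distance-triple map to ℝ³, has image exactly {(x,y,z) ∈ (0,π]³ : x+y+z ≤ 2π, x ≤ y+z, y ≤ z+x, z ≤ x+y}. -/

import Mathlib

open scoped RealInnerProductSpace

noncomputable def sdist (u v : EuclideanSpace ℝ (Fin 3)) : ℝ :=
  Real.arccos ⟪u, v⟫

def unitSphere : Set (EuclideanSpace ℝ (Fin 3)) :=
  Metric.sphere (0 : EuclideanSpace ℝ (Fin 3)) 1

open Real

namespace SphereAux

lemma arccos_antitone : Antitone Real.arccos := fun x y h => by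
  simp only [Real.arccos]
  have := Real.monotone_arcsin h
  linarith

lemma inner_le_one {u v : EuclideanSpace ℝ (Fin 3)} (hu : ‖u‖ = 1) (hv : ‖v‖ = 1) :
    ⟪u, v⟫ ≤ 1 := by
  have := real_inner_le_norm u v
  rwa [hu, hv, one_mul] at this

lemma neg_one_le_inner {u v : EuclideanSpace ℝ (Fin 3)} (hu : ‖u‖ = 1) (hv : ‖v‖ = 1) :
    -1 ≤ ⟪u, v⟫ := by
  have := abs_real_inner_le_norm u v
  rw [hu, hv, one_mul] at this
  linarith [neg_abs_le (⟪u, v⟫ : ℝ)]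

lemma cos_sdist {u v : EuclideanSpace ℝ (Fin 3)} (hu : ‖u‖ = 1) (hv : ‖v‖ = 1) :
    Real.cos (sdist u v) = ⟪u, v⟫ :=
  Real.cos_arccos (neg_one_le_inner hu hv) (inner_le_one hu hv)

lemma sin_sdist (u v : EuclideanSpace ℝ (Fin 3)) :
    Real.sin (sdist u v) = Real.sqrt (1 - ⟪u, v⟫ ^ 2) :=
  Real.sin_arccos _

lemma sdist_comm (u v : EuclideanSpace ℝ (Fin 3)) : sdist u v = sdist v u := by
  unfold sdist; rw [real_inner_comm]

lemma sdist_nonneg (u v : EuclideanSpace ℝ (Fin 3)) : 0 ≤ sdist u v :=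
  Real.arccos_nonneg _

lemma sdist_le_pi (u v : EuclideanSpace ℝ (Fin 3)) : sdist u v ≤ π :=
  Real.arccos_le_pi _

/-- Key inequality for the spherical triangle inequality. -/
lemma key_ineq {u v w : EuclideanSpace ℝ (Fin 3)} (hu : ‖u‖ = 1) (hv : ‖v‖ = 1)
    (hw : ‖w‖ = 1) :
    ⟪u, v⟫ * ⟪v, w⟫ - Real.sqrt (1 - ⟪u, v⟫ ^ 2) * Real.sqrt (1 - ⟪v, w⟫ ^ 2) ≤ ⟪u, w⟫ := by
  set c : ℝ := ⟪u, v⟫ with hc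
  set d : ℝ := ⟪v, w⟫ with hd
  have hu2 : ⟪u, u⟫ = 1 := by rw [real_inner_self_eq_norm_sq, hu]; norm_num
  have hv2 : ⟪v, v⟫ = 1 := by rw [real_inner_self_eq_norm_sq, hv]; norm_num
  have hw2 : ⟪w, w⟫ = 1 := by rw [real_inner_self_eq_norm_sq, hw]; norm_num
  have hvu : (⟪v, u⟫ : ℝ) = c := by rw [real_inner_comm]
  have hvw : (⟪v, w⟫ : ℝ) = d := rfl
  have hwv : (⟪w, v⟫ : ℝ) = d := by rw [real_inner_comm]
  have huu' : ⟪u - c • v, u - c • v⟫ = 1 - c ^ 2 := by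
    simp only [inner_sub_left, inner_sub_right, real_inner_smul_left, real_inner_smul_right,
      hu2, hv2, hvu, ← hc]
    ring
  have hww' : ⟪w - d • v, w - d • v⟫ = 1 - d ^ 2 := by
    simp only [inner_sub_left, inner_sub_right, real_inner_smul_left, real_inner_smul_right,
      hw2, hv2, hwv, hvw]
    ring
  have hcross : ⟪u - c • v, w - d • v⟫ = ⟪u, w⟫ - c * d := by
    simp only [inner_sub_left, inner_sub_right, real_inner_smul_left, real_inner_smul_right,
      hv2, hvu, hvw, ← hc]
    ring
  have hnu : ‖u - c • v‖ = Real.sqrt (1 - c ^ 2) := by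
    rw [norm_eq_sqrt_real_inner, huu']
  have hnw : ‖w - d • v‖ = Real.sqrt (1 - d ^ 2) := by
    rw [norm_eq_sqrt_real_inner, hww']
  have habs := abs_real_inner_le_norm (u - c • v) (w - d • v)
  rw [hnu, hnw, hcross] at habs
  have := neg_abs_le (⟪u, w⟫ - c * d)
  linarith

lemma sdist_triangle {u v w : EuclideanSpace ℝ (Fin 3)} (hu : ‖u‖ = 1) (hv : ‖v‖ = 1)
    (hw : ‖w‖ = 1) : sdist u w ≤ sdist u v + sdist v w := by
  have key : Real.cos (sdist u v + sdist v w) ≤ ⟪u, w⟫ := by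
    rw [Real.cos_add, cos_sdist hu hv, cos_sdist hv hw, sin_sdist, sin_sdist]
    exact key_ineq hu hv hw
  by_cases h : π ≤ sdist u v + sdist v w
  · exact le_trans (sdist_le_pi u w) h
  push_neg at h
  have h0 : 0 ≤ sdist u v + sdist v w := by
    have := sdist_nonneg u v; have := sdist_nonneg v w; linarith
  calc sdist u w = Real.arccos ⟪u, w⟫ := rfl
    _ ≤ Real.arccos (Real.cos (sdist u v + sdist v w)) := arccos_antitone key
    _ = sdist u v + sdist v w := Real.arccos_cos h0 h.le

noncomputable def v3 (a b c : ℝ) : EuclideanSpace ℝ (Fin 3) :=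
  (WithLp.equiv 2 (Fin 3 → ℝ)).symm ![a, b, c]

lemma inner3 (a b c a' b' c' : ℝ) :
    ⟪v3 a b c, v3 a' b' c'⟫ = a * a' + b * b' + c * c' := by
  simp [v3, PiLp.inner_apply, Fin.sum_univ_three, RCLike.inner_apply]
  ring

lemma mem_sphere_of_inner {v : EuclideanSpace ℝ (Fin 3)} (h : ⟪v, v⟫ = 1) :
    v ∈ unitSphere := by
  have hn : ‖v‖ = 1 := by
    have h2 : ‖v‖ ^ 2 = 1 := by rw [← real_inner_self_eq_norm_sq, h]
    nlinarith [norm_nonneg v]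
  simpa [unitSphere] using hn

end SphereAux

set_option maxHeartbeats 2000000 in
theorem stmt_19 :
    (∀ A : EuclideanSpace ℝ (Fin 3) ≃ₗᵢ[ℝ] EuclideanSpace ℝ (Fin 3),
      ∀ p q : EuclideanSpace ℝ (Fin 3), sdist (A p) (A q) = sdist p q) ∧
    {t : ℝ × ℝ × ℝ | ∃ p q r : EuclideanSpace ℝ (Fin 3),
        p ∈ unitSphere ∧ q ∈ unitSphere ∧ r ∈ unitSphere ∧
        p ≠ q ∧ q ≠ r ∧ r ≠ p ∧
        t = (sdist p q, sdist q r, sdist r p)} =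
      {t : ℝ × ℝ × ℝ | 0 < t.1 ∧ 0 < t.2.1 ∧ 0 < t.2.2 ∧
        t.1 ≤ Real.pi ∧ t.2.1 ≤ Real.pi ∧ t.2.2 ≤ Real.pi ∧
        t.1 + t.2.1 + t.2.2 ≤ 2 * Real.pi ∧ t.1 ≤ t.2.1 + t.2.2 ∧
        t.2.1 ≤ t.2.2 + t.1 ∧ t.2.2 ≤ t.1 + t.2.1} := by
  open SphereAux in
  constructor
  · intro A p q
    unfold sdist
    rw [A.inner_map_map]
  · ext ⟨x, y, z⟩
    simp only [Set.mem_setOf_eq]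
    constructor
    · rintro ⟨p, q, r, hp, hq, hr, hpq, hqr, hrp, ht⟩
      have hp1 : ‖p‖ = 1 := by simpa [unitSphere] using hp
      have hq1 : ‖q‖ = 1 := by simpa [unitSphere] using hq
      have hr1 : ‖r‖ = 1 := by simpa [unitSphere] using hr
      obtain ⟨hx, hy, hz⟩ : x = sdist p q ∧ y = sdist q r ∧ z = sdist r p := by
        simpa [Prod.ext_iff] using ht
      subst hx; subst hy; subst hz
      have hnr1 : ‖-r‖ = 1 := by rw [norm_neg, hr1]
      refine ⟨?_, ?_, ?_, sdist_le_pi _ _, sdist_le_pi _ _, sdist_le_pi _ _, ?_, ?_, ?_, ?_⟩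
      · exact Real.arccos_pos.mpr ((inner_lt_one_iff_real_of_norm_eq_one hp1 hq1).mpr hpq)
      · exact Real.arccos_pos.mpr ((inner_lt_one_iff_real_of_norm_eq_one hq1 hr1).mpr hqr)
      · exact Real.arccos_pos.mpr ((inner_lt_one_iff_real_of_norm_eq_one hr1 hp1).mpr hrp)
      · -- sum ≤ 2π
        have h1 : sdist p q ≤ sdist p (-r) + sdist (-r) q := sdist_triangle hp1 hnr1 hq1
        have h2 : sdist p (-r) = Real.pi - sdist p r := by
          unfold sdist; rw [inner_neg_right, Real.arccos_neg]
        have h3 : sdist (-r) q = Real.pi - sdist r q := by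
          unfold sdist; rw [inner_neg_left, Real.arccos_neg]
        rw [h2, h3] at h1
        rw [sdist_comm r p]
        rw [sdist_comm q r]
        linarith
      · have h1 : sdist p q ≤ sdist p r + sdist r q := sdist_triangle hp1 hr1 hq1
        rw [sdist_comm p r, sdist_comm r q] at h1
        linarith
      · have h1 : sdist q r ≤ sdist q p + sdist p r := sdist_triangle hq1 hp1 hr1
        rw [sdist_comm q p, sdist_comm p r] at h1
        linarith
      · have h1 : sdist r p ≤ sdist r q + sdist q p := sdist_triangle hr1 hq1 hp1
        rw [sdist_comm r q, sdist_comm q p] at h1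
        linarith
    · rintro ⟨hx0, hy0, hz0, hxπ, hyπ, hzπ, hsum, hxyz, hyzx, hzxy⟩
      -- construct the triangle
      set s : ℝ := Real.sin x * Real.sin z with hs
      set D : ℝ := Real.cos y - Real.cos x * Real.cos z with hD
      have hsx : 0 ≤ Real.sin x := Real.sin_nonneg_of_nonneg_of_le_pi hx0.le hxπ
      have hsz : 0 ≤ Real.sin z := Real.sin_nonneg_of_nonneg_of_le_pi hz0.le hzπ
      have hs0 : 0 ≤ s := mul_nonneg hsx hsz
      have habs : |D| ≤ s := by
        rw [abs_le]
        constructor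
        · -- -s ≤ D, i.e. cos (x+z) ≤ cos y
          by_cases h : x + z ≤ π
          · have := Real.cos_le_cos_of_nonneg_of_le_pi hy0.le h (show y ≤ x + z by linarith)
            rw [Real.cos_add] at this
            simp only [hD, hs]
            linarith
          · push_neg at h
            have h2 : Real.cos (2 * π - (x + z)) ≤ Real.cos y := by
              exact Real.cos_le_cos_of_nonneg_of_le_pi hy0.le (by linarith) (by linarith)
            have h3 : Real.cos (2 * π - (x + z)) = Real.cos (x + z) := by
              rw [Real.cos_sub]
              simp [Real.cos_two_pi, Real.sin_two_pi]
            rw [h3, Real.cos_add] at h2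
            simp only [hD, hs]
            linarith
        · -- D ≤ s, i.e. cos y ≤ cos (x - z)
          have h1 : Real.cos y ≤ Real.cos |x - z| := by
            apply Real.cos_le_cos_of_nonneg_of_le_pi (abs_nonneg _) hyπ
            rw [abs_sub_le_iff]
            constructor <;> linarith
          have h2 : Real.cos |x - z| = Real.cos (x - z) := by
            rcases abs_choice (x - z) with h | h <;> rw [h]
            · rw [Real.cos_neg]
          rw [h2, Real.cos_sub] at h1
          simp only [hD, hs]
          linarith
      set c : ℝ := if s = 0 then 1 else D / s with hc
      have hc1 : |c| ≤ 1 := by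
        rw [hc]
        split_ifs with h
        · simp
        · rw [abs_div, abs_of_nonneg hs0, div_le_one (lt_of_le_of_ne hs0 (Ne.symm h))]
          exact habs
      have hsc : s * c = D := by
        rw [hc]
        split_ifs with h
        · rw [h] at habs ⊢
          have : |D| ≤ 0 := by simpa using habs
          have : D = 0 := by simpa [abs_nonpos_iff] using this
          simp [this]
        · field_simp
      have hc2 : c ^ 2 ≤ 1 := by
        have := sq_abs c
        nlinarith [abs_nonneg c]
      have hsqc : Real.sqrt (1 - c ^ 2) ^ 2 = 1 - c ^ 2 :=
        Real.sq_sqrt (by linarith)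
      set p : EuclideanSpace ℝ (Fin 3) := SphereAux.v3 1 0 0 with hpdef
      set q : EuclideanSpace ℝ (Fin 3) := SphereAux.v3 (Real.cos x) (Real.sin x) 0 with hqdef
      set r : EuclideanSpace ℝ (Fin 3) :=
        SphereAux.v3 (Real.cos z) (Real.sin z * c) (Real.sin z * Real.sqrt (1 - c ^ 2)) with hrdef
      have hpp : ⟪p, p⟫ = 1 := by rw [hpdef, SphereAux.inner3]; ring
      have hqq : ⟪q, q⟫ = 1 := by
        rw [hqdef, SphereAux.inner3]
        nlinarith [Real.sin_sq_add_cos_sq x]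
      have hrr : ⟪r, r⟫ = 1 := by
        rw [hrdef, SphereAux.inner3]
        nlinarith [Real.sin_sq_add_cos_sq z, hsqc]
      have hpq : ⟪p, q⟫ = Real.cos x := by rw [hpdef, hqdef, SphereAux.inner3]; ring
      have hqr : ⟪q, r⟫ = Real.cos y := by
        rw [hqdef, hrdef, SphereAux.inner3]
        have : Real.cos x * Real.cos z + Real.sin x * (Real.sin z * c) = Real.cos x * Real.cos z + s * c := by
          rw [hs]; ring
        rw [this, hsc, hD]
        ring
      have hrp : ⟪r, p⟫ = Real.cos z := by rw [hrdef, hpdef, SphereAux.inner3]; ring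
      have hdpq : sdist p q = x := by
        unfold sdist; rw [hpq, Real.arccos_cos hx0.le hxπ]
      have hdqr : sdist q r = y := by
        unfold sdist; rw [hqr, Real.arccos_cos hy0.le hyπ]
      have hdrp : sdist r p = z := by
        unfold sdist; rw [hrp, Real.arccos_cos hz0.le hzπ]
      refine ⟨p, q, r, SphereAux.mem_sphere_of_inner hpp, SphereAux.mem_sphere_of_inner hqq,
        SphereAux.mem_sphere_of_inner hrr, ?_, ?_, ?_, ?_⟩
      · intro h
        rw [h] at hdpq
        unfold sdist at hdpq
        rw [hqq, Real.arccos_one] at hdpq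
        linarith
      · intro h
        rw [h] at hdqr
        unfold sdist at hdqr
        rw [hrr, Real.arccos_one] at hdqr
        linarith
      · intro h
        rw [h] at hdrp
        unfold sdist at hdrp
        rw [hpp, Real.arccos_one] at hdrp
        linarith
      · rw [hdpq, hdqr, hdrp]
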